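/- Let G=(V,W,E) be a label cover instance with m edges in which some label assignment ℓ:V∪W→L satisfies every edge. Then in the StackSP instance produced by the reduction, the pricing that sets p(e_{i,κ,λ})=2 when κ=ℓ(v_i) and λ=ℓ(w_i), and p(e_{i,κ,λ})=+∞ otherwise, yields revenue exactly 2m: a minimum-cost s-t path uses the priced-2 pricable edge in every one of the m gadgets. -/

import Mathlib

open scoped ENNReal

/-! ## Label cover instances -/

/-- A label cover instance: a bipartite graph `(V, W, E)` with edge list
`(ve i, we i)` for `i : Fin m`, a label set `Fin k`, and for every edge `i` a
nonempty set `R i` of satisfying label pairs. -/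
structure LabelCover where
  V : Type
  W : Type
  m : ℕ
  k : ℕ
  ve : Fin m → V
  we : Fin m → W
  R : Fin m → Finset (Fin k × Fin k)
  R_nonempty : ∀ i, (R i).Nonempty

namespace LabelCover

/-- The label assignment `(ℓv, ℓw)` satisfies edge `i`. -/
def Sat (I : LabelCover) (ℓv : I.V → Fin I.k) (ℓw : I.W → Fin I.k) (i : Fin I.m) : Prop :=
  (ℓv (I.ve i), ℓw (I.we i)) ∈ I.R i

instance (I : LabelCover) (ℓv : I.V → Fin I.k) (ℓw : I.W → Fin I.k) :
    DecidablePred (I.Sat ℓv ℓw) := fun i =>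
  decidable_of_iff ((ℓv (I.ve i), ℓw (I.we i)) ∈ I.R i) Iff.rfl

/-- The number of edges satisfied by the assignment `(ℓv, ℓw)`. -/
def satCount (I : LabelCover) (ℓv : I.V → Fin I.k) (ℓw : I.W → Fin I.k) : ℕ :=
  (Finset.univ.filter (I.Sat ℓv ℓw)).card

/-- The label pairs `a` on edge `i` and `b` on edge `j` are conflicting. -/
def Conflict (I : LabelCover) (i j : Fin I.m) (a b : Fin I.k × Fin I.k) : Prop :=
  (I.ve i = I.ve j ∧ a.1 ≠ b.1) ∨ (I.we i = I.we j ∧ a.2 ≠ b.2)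

/-! ## The StackSP instance produced by the reduction -/

/-- The nodes of the StackSP instance: the gadget boundary nodes `bd i`
(`bd i.castSucc` is the left endpoint of gadget `i`, `bd i.succ` its right
endpoint; `bd 0 = s`, `bd (last m) = t`), and for every gadget `i` and label
pair `a` the tail `tl i a` and head `hd i a` of the pricable edge `e_{i,a}`. -/
inductive Node (m k : ℕ) where
  | bd (i : Fin (m + 1))
  | tl (i : Fin m) (a : Fin k × Fin k)
  | hd (i : Fin m) (a : Fin k × Fin k)
  deriving DecidableEq

/-- The edges of the StackSP instance: for every gadget `i` and label pair `a`,
the (fixed-cost 0) edge `enter i a` from the left endpoint of gadget `i` to the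
tail of the pricable edge `price i a`, the pricable edge itself, and the
(fixed-cost 0) edge `exit i a` from its head to the right endpoint of gadget `i`;
the parallel fixed-cost-2 edge `skip i` of gadget `i`; and the shortcut edge
`shortcut i j a b` of fixed cost `j - i - 1` from the head of `price i a` to
the tail of `price j b`. -/
inductive Edge (m k : ℕ) where
  | enter (i : Fin m) (a : Fin k × Fin k)
  | price (i : Fin m) (a : Fin k × Fin k)
  | exit (i : Fin m) (a : Fin k × Fin k)
  | skip (i : Fin m)
  | shortcut (i j : Fin m) (a b : Fin k × Fin k)
  deriving DecidableEq

namespace Edge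

/-- Source node of an edge (all edges are directed from left to right). -/
def src {m k : ℕ} : Edge m k → Node m k
  | enter i _ => .bd i.castSucc
  | price i a => .tl i a
  | exit i a => .hd i a
  | skip i => .bd i.castSucc
  | shortcut i _ a _ => .hd i a

/-- Destination node of an edge. -/
def dst {m k : ℕ} : Edge m k → Node m k
  | enter i a => .tl i a
  | price i a => .hd i a
  | exit i _ => .bd i.succ
  | skip i => .bd i.succ
  | shortcut _ j _ b => .tl j b

/-- The pricable edges. -/
def IsPricable {m k : ℕ} : Edge m k → Prop
  | price _ _ => True
  | _ => False

/-- The fixed cost of an edge: `2` for the parallel fixed edge of a gadget,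
`j - i - 1` for a shortcut from gadget `i` to gadget `j`, `0` otherwise
(pricable edges have fixed cost `0`). -/
noncomputable def fixedCost {m k : ℕ} : Edge m k → ℝ≥0∞
  | skip _ => 2
  | shortcut i j _ _ => (((j : ℕ) - (i : ℕ) - 1 : ℕ) : ℝ≥0∞)
  | _ => 0

/-- Whether an edge is a pricable edge of gadget `g` (as a `Bool`). -/
def isPricableOf {m k : ℕ} (g : Fin m) : Edge m k → Bool
  | price i _ => i == g
  | _ => false

end Edge

/-- The edges actually present in the StackSP instance built from `I`:
gadget `i` has edges only for the label pairs in `R i`, and a shortcut from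
gadget `i` to gadget `j` exists precisely when `i < j` and the corresponding
label pairs are conflicting. -/
def EdgeOK (I : LabelCover) : Edge I.m I.k → Prop
  | .enter i a => a ∈ I.R i
  | .price i a => a ∈ I.R i
  | .exit i a => a ∈ I.R i
  | .skip _ => True
  | .shortcut i j a b =>
      (i : ℕ) < (j : ℕ) ∧ a ∈ I.R i ∧ b ∈ I.R j ∧ I.Conflict i j a b

/-- A pricing assigns a nonnegative (possibly infinite) price to every
pricable edge `e_{i,a}`. -/
abbrev Pricing (I : LabelCover) := Fin I.m → Fin I.k × Fin I.k → ℝ≥0∞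

/-- The price contributed by an edge (the price of a pricable edge, `0` for a
fixed-cost edge). -/
noncomputable def priceOf (I : LabelCover) (p : Pricing I) : Edge I.m I.k → ℝ≥0∞
  | .price i a => p i a
  | _ => 0

/-- The total cost of an edge: fixed cost plus price. -/
noncomputable def edgeCost (I : LabelCover) (p : Pricing I) (e : Edge I.m I.k) : ℝ≥0∞ :=
  e.fixedCost + I.priceOf p e

/-- Directed walks in the StackSP instance of `I`, recorded as lists of
consecutive valid edges. -/
inductive Walk (I : LabelCover) : Node I.m I.k → Node I.m I.k → List (Edge I.m I.k) → Prop
  | nil (u : Node I.m I.k) : Walk I u u []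
  | cons {e : Edge I.m I.k} {v : Node I.m I.k} {es : List (Edge I.m I.k)} :
      I.EdgeOK e → Walk I e.dst v es → Walk I e.src v (e :: es)

/-- The source `s` of the instance: the left endpoint of gadget `1`. -/
def source (I : LabelCover) : Node I.m I.k := .bd 0

/-- The sink `t` of the instance: the right endpoint of gadget `m`. -/
def target (I : LabelCover) : Node I.m I.k := .bd (Fin.last I.m)

/-- Total cost (fixed costs plus prices) of a list of edges. -/
noncomputable def cost (I : LabelCover) (p : Pricing I) (es : List (Edge I.m I.k)) : ℝ≥0∞ :=
  (es.map (I.edgeCost p)).sum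

/-- Revenue of a list of edges: the sum of the prices of its pricable edges. -/
noncomputable def revenue (I : LabelCover) (p : Pricing I) (es : List (Edge I.m I.k)) : ℝ≥0∞ :=
  (es.map (I.priceOf p)).sum

/-- Total fixed cost of a list of edges. -/
noncomputable def fixedSum (I : LabelCover) (es : List (Edge I.m I.k)) : ℝ≥0∞ :=
  (es.map Edge.fixedCost).sum

/-- `P` is a minimum-cost directed `s`-`t` path under pricing `p`. -/
def IsOptPath (I : LabelCover) (p : Pricing I) (P : List (Edge I.m I.k)) : Prop :=
  Walk I I.source I.target P ∧
    ∀ Q, Walk I I.source I.target Q → I.cost p P ≤ I.cost p Q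

/-- `P` is the path purchased by the consumer: a minimum-cost `s`-`t` path
which, among minimum-cost paths, maximizes the revenue. -/
def IsPurchased (I : LabelCover) (p : Pricing I) (P : List (Edge I.m I.k)) : Prop :=
  I.IsOptPath p P ∧ ∀ Q, I.IsOptPath p Q → I.revenue p Q ≤ I.revenue p P

/-! ## P-edges, significant gadgets and islands -/

/-- Gadget `g` has a P-edge, i.e. `P` uses a pricable edge of gadget `g`. -/
def HasPEdge (I : LabelCover) (P : List (Edge I.m I.k)) (g : Fin I.m) : Prop :=
  ∃ a, Edge.price g a ∈ P

/-- Gadget `g'` has a P-edge that is joined to the P-edge `e_{g,a}` of gadget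
`g` by a shortcut edge (in particular `g < g'`). -/
def Linked (I : LabelCover) (P : List (Edge I.m I.k)) (g : Fin I.m)
    (a : Fin I.k × Fin I.k) (g' : Fin I.m) : Prop :=
  ∃ b, Edge.price g' b ∈ P ∧ I.EdgeOK (.shortcut g g' a b)

/-- Every pricable edge not on `P` has price `+∞` (the w.l.o.g. normalization). -/
def OffPathInfty (I : LabelCover) (p : Pricing I) (P : List (Edge I.m I.k)) : Prop :=
  ∀ g a, Edge.price g a ∉ P → p g a = ⊤

/-- The length `in_g` of the shortcut edge used by `P` to enter gadget `g`
(`0` if no shortcut is used). -/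
noncomputable def inLen (I : LabelCover) (P : List (Edge I.m I.k)) (g : Fin I.m) : ℕ :=
  if h : ∃ g' : Fin I.m, ∃ a b, Edge.shortcut g' g a b ∈ P then
    (g : ℕ) - (h.choose : ℕ) - 1
  else 0

/-- The length `out_g` of the shortcut edge used by `P` to exit gadget `g`
(`0` if no shortcut is used). -/
noncomputable def outLen (I : LabelCover) (P : List (Edge I.m I.k)) (g : Fin I.m) : ℕ :=
  if h : ∃ g' : Fin I.m, ∃ a b, Edge.shortcut g g' a b ∈ P then
    (h.choose : ℕ) - (g : ℕ) - 1
  else 0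

/-- `P` splits as `P1 ++ M ++ P2` where `P1` goes from `s` to `u`, `M` from `u`
to `v` and `P2` from `v` to `t`. -/
def SplitsAt (I : LabelCover) (P P1 M P2 : List (Edge I.m I.k))
    (u v : Node I.m I.k) : Prop :=
  P = P1 ++ M ++ P2 ∧ Walk I I.source u P1 ∧ Walk I u v M ∧ Walk I v I.target P2

/-- The sequence `σ 0 < σ 1 < … < σ (r-1)` of significant gadgets of the
purchased path `P`, together with the labels of their P-edges:
`σ 0` is the first gadget with a P-edge; given `σ i`, if some gadget beyond
`σ i` has a P-edge joined to the P-edge of `σ i` by a shortcut edge then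
`σ (i+1)` is the largest such gadget, and otherwise `σ i` is an end point and
`σ (i+1)` is the next gadget after `σ i` having a P-edge; the process stops at
`σ (r-1)`, which is an end point, with no P-edge beyond it. -/
structure SigSeq (I : LabelCover) (P : List (Edge I.m I.k)) where
  r : ℕ
  rpos : 0 < r
  σ : Fin r → Fin I.m
  lab : Fin r → Fin I.k × Fin I.k
  mono : StrictMono σ
  mem : ∀ i, Edge.price (σ i) (lab i) ∈ P
  first : ∀ g, I.HasPEdge P g → σ ⟨0, rpos⟩ ≤ g
  step : ∀ i : ℕ, ∀ h : i + 1 < r,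
    (I.Linked P (σ ⟨i, Nat.lt_of_succ_lt h⟩) (lab ⟨i, Nat.lt_of_succ_lt h⟩) (σ ⟨i + 1, h⟩) ∧
      ∀ g, I.Linked P (σ ⟨i, Nat.lt_of_succ_lt h⟩) (lab ⟨i, Nat.lt_of_succ_lt h⟩) g →
        g ≤ σ ⟨i + 1, h⟩) ∨
    ((¬ ∃ g, I.Linked P (σ ⟨i, Nat.lt_of_succ_lt h⟩) (lab ⟨i, Nat.lt_of_succ_lt h⟩) g) ∧
      I.HasPEdge P (σ ⟨i + 1, h⟩) ∧
      ∀ g, σ ⟨i, Nat.lt_of_succ_lt h⟩ < g → I.HasPEdge P g → σ ⟨i + 1, h⟩ ≤ g)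
  last : ¬ ∃ g, I.Linked P (σ ⟨r - 1, by omega⟩) (lab ⟨r - 1, by omega⟩) g
  cover : ∀ g, I.HasPEdge P g → g ≤ σ ⟨r - 1, by omega⟩

/-- Significant gadget `σ i` is an end point: no gadget has a P-edge joined to
the P-edge of `σ i` by a shortcut edge. -/
def SigSeq.IsEnd {I : LabelCover} {P : List (Edge I.m I.k)} (S : I.SigSeq P)
    (i : Fin S.r) : Prop :=
  ¬ ∃ g, I.Linked P (S.σ i) (S.lab i) g

/-- Significant gadget `σ i` is a start point: it is the first significant
gadget, or its predecessor is an end point. -/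
def SigSeq.IsStart {I : LabelCover} {P : List (Edge I.m I.k)} (S : I.SigSeq P)
    (i : Fin S.r) : Prop :=
  (i : ℕ) = 0 ∨ (0 < (i : ℕ) ∧ ∃ h : (i : ℕ) - 1 < S.r, S.IsEnd ⟨(i : ℕ) - 1, h⟩)

/-- `σ α, …, σ ω` is an island: `α` is a start point, `ω` is the next end
point after `α`. -/
def SigSeq.IsIsland {I : LabelCover} {P : List (Edge I.m I.k)} (S : I.SigSeq P)
    (α ω : Fin S.r) : Prop :=
  α ≤ ω ∧ S.IsStart α ∧ S.IsEnd ω ∧ ∀ i : Fin S.r, α ≤ i → i < ω → ¬ S.IsEnd i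

end LabelCover

open LabelCover

/-! ## Auxiliary machinery for the completeness proof -/

namespace LabelCover

/-- A cons rule for walks with an explicit source equation. -/
theorem Walk.cons' {I : LabelCover} {e : Edge I.m I.k} {u v : Node I.m I.k}
    {es : List (Edge I.m I.k)} (hok : I.EdgeOK e) (hsrc : e.src = u)
    (hw : Walk I e.dst v es) : Walk I u v (e :: es) := by
  subst hsrc; exact Walk.cons hok hw

/-- The canonical path taking, in each gadget `i ≥ n`, the pricable edge
labelled `av i`. -/
def goodPath (I : LabelCover) (av : Fin I.m → Fin I.k × Fin I.k) (n : ℕ) :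
    List (Edge I.m I.k) :=
  if h : n < I.m then
    .enter ⟨n, h⟩ (av ⟨n, h⟩) :: .price ⟨n, h⟩ (av ⟨n, h⟩) ::
      .exit ⟨n, h⟩ (av ⟨n, h⟩) :: goodPath I av (n + 1)
  else []
  termination_by I.m - n

theorem goodPath_walk (I : LabelCover) (av : Fin I.m → Fin I.k × Fin I.k)
    (hav : ∀ i, av i ∈ I.R i) :
    ∀ (n : ℕ) (h : n ≤ I.m),
      Walk I (.bd ⟨n, Nat.lt_succ_of_le h⟩) I.target (goodPath I av n)
  | n, h => by
    rw [goodPath]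
    split
    · next hn =>
      refine Walk.cons' (e := .enter ⟨n, hn⟩ (av ⟨n, hn⟩)) (hav _) rfl ?_
      refine Walk.cons' (e := .price ⟨n, hn⟩ (av ⟨n, hn⟩)) (hav _) rfl ?_
      refine Walk.cons' (e := .exit ⟨n, hn⟩ (av ⟨n, hn⟩)) (hav _) rfl ?_
      exact goodPath_walk I av hav (n + 1) hn
    · next hn =>
      have hm : n = I.m := by omega
      subst hm
      have : (Node.bd (⟨I.m, Nat.lt_succ_of_le h⟩ : Fin (I.m + 1)) : Node I.m I.k)
          = I.target := by
        simp [target, Fin.last]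
      rw [this]
      exact Walk.nil _
  termination_by n => I.m - n

theorem goodPath_price_mem (I : LabelCover) (av : Fin I.m → Fin I.k × Fin I.k) :
    ∀ (n : ℕ) (i : Fin I.m), n ≤ (i : ℕ) →
      Edge.price i (av i) ∈ goodPath I av n
  | n, i, hni => by
    rw [goodPath]
    have hn : n < I.m := lt_of_le_of_lt hni i.isLt
    rw [dif_pos hn]
    rcases eq_or_lt_of_le hni with he | hlt
    · have : i = ⟨n, hn⟩ := by ext; simp; omega
      subst this
      simp
    · have := goodPath_price_mem I av (n + 1) i hlt
      simp [this]
  termination_by n => I.m - n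

theorem goodPath_cost (I : LabelCover) (av : Fin I.m → Fin I.k × Fin I.k)
    (p : Pricing I) (hp2 : ∀ i, p i (av i) = 2) :
    ∀ n : ℕ, I.cost p (goodPath I av n) = 2 * ((I.m - n : ℕ) : ℝ≥0∞) ∧
      I.revenue p (goodPath I av n) = 2 * ((I.m - n : ℕ) : ℝ≥0∞)
  | n => by
    rw [goodPath]
    split
    · next hn =>
      have ih := goodPath_cost I av p hp2 (n + 1)
      simp only [cost, revenue] at ih
      have hmn : ((I.m - n : ℕ) : ℝ≥0∞) = ((I.m - (n + 1) : ℕ) : ℝ≥0∞) + 1 := by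
        have h' : I.m - n = I.m - (n + 1) + 1 := by omega
        rw [h']; push_cast; ring
      constructor
      · simp only [cost, List.map_cons, List.sum_cons, edgeCost, Edge.fixedCost,
          priceOf, hp2]
        rw [ih.1, hmn]
        ring
      · simp only [revenue, List.map_cons, List.sum_cons, priceOf, hp2]
        rw [ih.2, hmn]
        ring
    · next hn =>
      have : I.m - n = 0 := by omega
      simp [cost, revenue, this]
      exact tsub_eq_zero_of_le (by exact_mod_cast (by omega : I.m ≤ n))
  termination_by n => I.m - n

/-- Potential function certifying the lower bound `2m` on the cost of any
`s`-`t` walk. -/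
noncomputable def pot (I : LabelCover) (av : Fin I.m → Fin I.k × Fin I.k) :
    Node I.m I.k → ℝ≥0∞
  | .bd i => 2 * ((i : ℕ) : ℝ≥0∞)
  | .tl i a => if a = av i then 2 * ((i : ℕ) : ℝ≥0∞) else 0
  | .hd i a => if a = av i then 2 * ((i : ℕ) : ℝ≥0∞) + 2 else ⊤

theorem pot_edge (I : LabelCover) (av : Fin I.m → Fin I.k × Fin I.k)
    (p : Pricing I)
    (hp : ∀ i a, p i a = if a = av i then 2 else ⊤)
    (hgood : ∀ i j : Fin I.m, (I.ve i = I.ve j → (av i).1 = (av j).1) ∧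
      (I.we i = I.we j → (av i).2 = (av j).2))
    (e : Edge I.m I.k) (he : I.EdgeOK e) :
    I.pot av e.dst ≤ I.pot av e.src + I.edgeCost p e := by
  cases e with
  | enter i a =>
    simp only [Edge.src, Edge.dst, pot, Fin.coe_castSucc]
    split
    · exact le_add_right le_rfl
    · exact bot_le
  | price i a =>
    simp only [Edge.src, Edge.dst, pot, edgeCost, Edge.fixedCost, priceOf, hp]
    by_cases ha : a = av i
    · simp [ha]
    · simp [ha]
  | exit i a =>
    simp only [Edge.src, Edge.dst, pot, edgeCost, Edge.fixedCost, priceOf,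
      Fin.val_succ]
    by_cases ha : a = av i
    · simp only [ha, if_pos rfl]
      push_cast
      rw [add_zero]
      ring_nf
      exact le_rfl
    · simp [ha]
  | skip i =>
    simp only [Edge.src, Edge.dst, pot, edgeCost, Edge.fixedCost, priceOf,
      Fin.val_succ, Fin.coe_castSucc]
    push_cast
    rw [add_zero]
    ring_nf
    exact le_rfl
  | shortcut i j a b =>
    obtain ⟨hij, hai, hbj, hcon⟩ := he
    simp only [Edge.src, Edge.dst, pot]
    by_cases hb : b = av j
    · by_cases ha : a = av i
      · exfalso
        subst ha; subst hb
        rcases hcon with ⟨hv, h1⟩ | ⟨hw, h2⟩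
        · exact h1 ((hgood i j).1 hv)
        · exact h2 ((hgood i j).2 hw)
      · rw [if_neg ha]
        simp
    · rw [if_neg hb]
      exact bot_le

theorem pot_walk (I : LabelCover) (av : Fin I.m → Fin I.k × Fin I.k)
    (p : Pricing I)
    (hp : ∀ i a, p i a = if a = av i then 2 else ⊤)
    (hgood : ∀ i j : Fin I.m, (I.ve i = I.ve j → (av i).1 = (av j).1) ∧
      (I.we i = I.we j → (av i).2 = (av j).2))
    {u v : Node I.m I.k} {es : List (Edge I.m I.k)} (hw : Walk I u v es) :
    I.pot av v ≤ I.pot av u + I.cost p es := by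
  induction hw with
  | nil u => simp [cost]
  | cons hok hw ih =>
    calc I.pot av _ ≤ I.pot av _ + I.cost p _ := ih
      _ ≤ (I.pot av _ + I.edgeCost p _) + I.cost p _ :=
          add_le_add_left (pot_edge I av p hp hgood _ hok) _
      _ = I.pot av _ + I.cost p (_ :: _) := by
          simp [cost, List.map_cons, add_assoc]

theorem revenue_le_cost (I : LabelCover) (p : Pricing I)
    (es : List (Edge I.m I.k)) : I.revenue p es ≤ I.cost p es := by
  induction es with
  | nil => simp [revenue, cost]
  | cons e es ih =>
    simp only [revenue, cost, List.map_cons, List.sum_cons] at *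
    exact add_le_add (le_add_self) ih

end LabelCover

/-- Completeness of the reduction. If the label assignment
`(ℓv, ℓw)` satisfies every edge of the label cover instance, then the pricing
setting `p (e_{i,κ,λ}) = 2` when `(κ,λ) = (ℓv v_i, ℓw w_i)` and `+∞` otherwise
yields revenue exactly `2m`: there is a minimum-cost `s`-`t` path using the
priced-2 pricable edge in every one of the `m` gadgets, of revenue `2m`, and no
minimum-cost path has larger revenue. -/
theorem stackSP_completeness (I : LabelCover)
    (ℓv : I.V → Fin I.k) (ℓw : I.W → Fin I.k)
    (hsat : ∀ i, I.Sat ℓv ℓw i)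
    (p : Pricing I)
    (hp : ∀ (i : Fin I.m) (a : Fin I.k × Fin I.k),
      p i a = if a = (ℓv (I.ve i), ℓw (I.we i)) then 2 else ⊤) :
    ∃ P : List (Edge I.m I.k),
      I.IsOptPath p P ∧
      I.revenue p P = 2 * (I.m : ℝ≥0∞) ∧
      (∀ i : Fin I.m, Edge.price i (ℓv (I.ve i), ℓw (I.we i)) ∈ P) ∧
      (∀ Q, I.IsOptPath p Q → I.revenue p Q ≤ 2 * (I.m : ℝ≥0∞)) := by
  classical
  set av : Fin I.m → Fin I.k × Fin I.k := fun i => (ℓv (I.ve i), ℓw (I.we i)) with hav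
  have hpav : ∀ i a, p i a = if a = av i then 2 else ⊤ := fun i a => hp i a
  have hp2 : ∀ i, p i (av i) = 2 := fun i => by rw [hpav]; simp
  have hgood : ∀ i j : Fin I.m, (I.ve i = I.ve j → (av i).1 = (av j).1) ∧
      (I.we i = I.we j → (av i).2 = (av j).2) := by
    intro i j
    constructor
    · intro h; simp [hav, h]
    · intro h; simp [hav, h]
  have havR : ∀ i, av i ∈ I.R i := fun i => hsat i
  refine ⟨goodPath I av 0, ?_, ?_, ?_, ?_⟩
  case _ =>
    constructor
    · have := goodPath_walk I av havR 0 (Nat.zero_le _)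
      convert this using 2
      rfl
    · intro Q hQ
      have hpotQ := pot_walk I av p hpav hgood hQ
      have hcost := (goodPath_cost I av p hp2 0).1
      rw [hcost]
      have hps : I.pot av I.source = 0 := by simp [source, pot]
      have hpt : I.pot av I.target = 2 * (I.m : ℝ≥0∞) := by
        simp [target, pot, Fin.last]
      rw [hps, hpt, zero_add] at hpotQ
      calc 2 * ((I.m - 0 : ℕ) : ℝ≥0∞) = 2 * (I.m : ℝ≥0∞) := by norm_num
        _ ≤ I.cost p Q := hpotQ
  case _ =>
    have := (goodPath_cost I av p hp2 0).2
    rw [this]; norm_num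
  case _ =>
    intro i
    exact goodPath_price_mem I av 0 i (Nat.zero_le _)
  case _ =>
    intro Q hQ
    have h1 : I.revenue p Q ≤ I.cost p Q := revenue_le_cost I p Q
    have h2 : I.cost p Q ≤ I.cost p (goodPath I av 0) := by
      refine hQ.2 _ ?_
      have := goodPath_walk I av havR 0 (Nat.zero_le _)
      convert this using 2
      rfl
    have h3 : I.cost p (goodPath I av 0) = 2 * (I.m : ℝ≥0∞) := by
      rw [(goodPath_cost I av p hp2 0).1]; norm_num
    calc I.revenue p Q ≤ I.cost p Q := h1
      _ ≤ _ := h2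
      _ = _ := h3
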